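/- arXiv:2505.10018 — 2 statements merged into one kernel-verified Lean document; each statement's English description precedes it below -/
import Mathlib

section
/- Let X be a topological space, let n be a positive integer, and let A : X → Mat_{n×n}(ℝ) be a continuous matrix-valued function such that A(x) is symmetric for every x ∈ X. For each x, list the (necessarily real) eigenvalues of A(x) in nondecreasing order with multiplicity as λ_1(x) ≤ λ_2(x) ≤ ⋯ ≤ λ_n(x). Then for every i ∈ {1,…,n}, the eigenvalue function x ↦ λ_i(x) is continuous on X. -/
open Polynomial Filter Topology Matrix Finset

lemma aux_sorted_unique {n : ℕ} {v w : Fin n → ℝ} (hv : Monotone v) (hw : Monotone w)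
    (h : Multiset.map v Finset.univ.val = Multiset.map w Finset.univ.val) : v = w := by
  apply List.ofFn_injective
  refine List.Perm.eq_of_sortedLE (List.sortedLE_ofFn_iff.2 hv) (List.sortedLE_ofFn_iff.2 hw) ?_
  have key : ∀ f : Fin n → ℝ,
      ((List.ofFn f : List ℝ) : Multiset ℝ) = Multiset.map f Finset.univ.val := by
    intro f
    simp [List.ofFn_eq_map, Fin.univ_def]
  rw [← Multiset.coe_eq_coe, key, key, h]

lemma aux_eval_charpoly {n : ℕ} (M : Matrix (Fin n) (Fin n) ℝ) (t : ℝ) :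
    (M.charpoly).eval t = (t • (1 : Matrix (Fin n) (Fin n) ℝ) - M).det := by
  rw [Matrix.charpoly, Polynomial.eval, ← Polynomial.coe_eval₂RingHom, RingHom.map_det]
  congr 1
  ext i j
  by_cases h : i = j <;>
    simp [Matrix.charmatrix_apply, h, Matrix.one_apply, Matrix.smul_apply, Matrix.sub_apply,
      Matrix.diagonal_apply, Matrix.map_apply]

lemma aux_root_bound {n : ℕ} {M : Matrix (Fin n) (Fin n) ℝ} {lam : ℝ}
    (h : M.charpoly.IsRoot lam) {R : ℝ} (hR : ∀ i j, |M i j| ≤ R) : |lam| ≤ n * R := by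
  have hdet : (lam • (1 : Matrix (Fin n) (Fin n) ℝ) - M).det = 0 := by
    rw [← aux_eval_charpoly]; exact h
  obtain ⟨v, hv0, hv⟩ := Matrix.exists_mulVec_eq_zero_iff.2 hdet
  obtain ⟨j₀, hj₀⟩ := Function.ne_iff.1 hv0
  obtain ⟨j, -, hj⟩ := Finset.exists_max_image Finset.univ (fun k => |v k|) ⟨j₀, Finset.mem_univ _⟩
  have hvj : 0 < |v j| :=
    lt_of_lt_of_le (abs_pos.2 (by simpa using hj₀)) (hj j₀ (Finset.mem_univ _))
  have hMv : M.mulVec v = lam • v := by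
    have h2 : (lam • (1 : Matrix (Fin n) (Fin n) ℝ)).mulVec v - M.mulVec v = 0 := by
      rw [← Matrix.sub_mulVec]; exact hv
    have h3 : (lam • (1 : Matrix (Fin n) (Fin n) ℝ)).mulVec v = lam • v := by
      rw [Matrix.smul_mulVec, Matrix.one_mulVec]
    rw [h3] at h2
    exact (sub_eq_zero.mp h2).symm
  have hR0 : 0 ≤ R := le_trans (abs_nonneg _) (hR j j)
  have hkey : |lam| * |v j| ≤ (n * R) * |v j| := by
    have h1 : |lam| * |v j| = |(M.mulVec v) j| := by
      rw [hMv]; simp [abs_mul]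
    rw [h1]
    have h2 : (M.mulVec v) j = ∑ k, M j k * v k := by
      simp [Matrix.mulVec, dotProduct]
    rw [h2]
    calc |∑ k, M j k * v k| ≤ ∑ k, |M j k * v k| := Finset.abs_sum_le_sum_abs _ _
      _ ≤ ∑ _k : Fin n, R * |v j| := by
          refine Finset.sum_le_sum fun k _ => ?_
          rw [abs_mul]
          exact mul_le_mul (hR j k) (hj k (Finset.mem_univ _)) (abs_nonneg _) hR0
      _ = (n * R) * |v j| := by simp [Finset.sum_const]; ring
  exact le_of_mul_le_mul_right hkey hvj


/-- **Continuity of ordered eigenvalue functions of a continuous symmetric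
matrix-valued function.**
Let `X` be a topological space, `n` a positive integer, and `A : X → Mat_{n×n}(ℝ)`
a continuous map such that `A x` is symmetric for every `x`.  Suppose
`ev : X → Fin n → ℝ` lists, for each `x`, the eigenvalues of `A x` (i.e. the real
roots of its characteristic polynomial, with multiplicity) in nondecreasing
order.  Then each function `x ↦ ev x i` is continuous on `X`. -/
theorem continuous_sorted_eigenvalues {X : Type*} [TopologicalSpace X]
    (n : ℕ) (hn : 0 < n) (A : X → Matrix (Fin n) (Fin n) ℝ)
    (hA_cont : Continuous A) (hA_symm : ∀ x, (A x).IsSymm)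
    (ev : X → Fin n → ℝ)
    (hev_sorted : ∀ x, Monotone (ev x))
    (hev_roots : ∀ x, (Matrix.charpoly (A x)).roots
        = Multiset.map (ev x) Finset.univ.val) :
    ∀ i : Fin n, Continuous fun x => ev x i := by
  have hprod : ∀ (x : X) (t : ℝ), (∏ k, (t - ev x k)) = ((A x).charpoly).eval t := by
    intro x t
    have hmon := (A x).charpoly_monic
    have hdeg : (A x).charpoly.natDegree = n := by
      simpa using (A x).charpoly_natDegree_eq_dim
    have hcard : Multiset.card ((A x).charpoly).roots = (A x).charpoly.natDegree := by
      rw [hev_roots, hdeg]; simp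
    have hfact := Polynomial.prod_multiset_X_sub_C_of_monic_of_roots_card_eq hmon hcard
    conv_rhs => rw [← hfact]
    rw [hev_roots, Polynomial.eval_multiset_prod, Multiset.map_map, Multiset.map_map,
      Finset.prod_eq_multiset_prod]
    simp [Function.comp]
  intro i
  rw [continuous_iff_continuousAt]
  intro x₀
  have key : Tendsto ev (𝓝 x₀) (𝓝 (ev x₀)) := by
    set R : ℝ := 1 + ∑ j : Fin n, ∑ k : Fin n, |A x₀ j k| with hRdef
    have hRlt : ∀ j k, |A x₀ j k| < R := by
      intro j k
      have h1 : |A x₀ j k| ≤ ∑ j', ∑ k', |A x₀ j' k'| :=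
        calc |A x₀ j k| ≤ ∑ k', |A x₀ j k'| :=
              Finset.single_le_sum (f := fun k' => |A x₀ j k'|) (fun _ _ => abs_nonneg _) (Finset.mem_univ k)
          _ ≤ ∑ j', ∑ k', |A x₀ j' k'| :=
              Finset.single_le_sum (f := fun j' => ∑ k', |A x₀ j' k'|)
                (fun _ _ => Finset.sum_nonneg fun _ _ => abs_nonneg _) (Finset.mem_univ j)
      rw [hRdef]; linarith
    have hent : ∀ᶠ x in 𝓝 x₀, ∀ j k, |A x j k| ≤ R := by
      rw [Filter.eventually_all]
      intro j
      rw [Filter.eventually_all]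
      intro k
      have hc : Continuous fun x => |A x j k| :=
        ((continuous_apply k).comp ((continuous_apply j).comp hA_cont)).abs
      exact (Filter.Tendsto.eventually_lt_const (hRlt j k) (hc.tendsto x₀)).mono
        fun x hx => hx.le
    set K : Set (Fin n → ℝ) := Set.univ.pi fun _ => Set.Icc (-((n : ℝ) * R)) ((n : ℝ) * R)
      with hKdef
    have hKc : IsCompact K := isCompact_univ_pi fun _ => isCompact_Icc
    have hevK : ∀ᶠ x in 𝓝 x₀, ev x ∈ K := by
      filter_upwards [hent] with x hx
      rw [hKdef]
      rw [Set.mem_univ_pi]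
      intro k
      rw [Set.mem_Icc, ← abs_le]
      have hroot : (A x).charpoly.IsRoot (ev x k) := by
        have hmem : ev x k ∈ ((A x).charpoly).roots := by
          rw [hev_roots]; exact Multiset.mem_map.2 ⟨k, by simp, rfl⟩
        exact Polynomial.isRoot_of_mem_roots hmem
      exact aux_root_bound hroot hx
    by_contra hnot
    obtain ⟨U, hUopen, hUx₀, hUpre⟩ :
        ∃ U : Set (Fin n → ℝ), IsOpen U ∧ ev x₀ ∈ U ∧ {x | ev x ∈ U} ∉ 𝓝 x₀ := by
      rw [tendsto_nhds] at hnot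
      push_neg at hnot
      obtain ⟨U, hU1, hU2, hU3⟩ := hnot
      exact ⟨U, hU1, hU2, hU3⟩
    set F : Filter (Fin n → ℝ) := Filter.map ev (𝓝 x₀) ⊓ 𝓟 Uᶜ with hFdef
    have hFne : F.NeBot := by
      rw [hFdef, Filter.inf_principal_neBot_iff]
      intro t ht
      rw [Set.inter_compl_nonempty_iff]
      intro hsub
      exact hUpre (Filter.mem_of_superset (Filter.mem_map.1 ht) fun x hx => hsub hx)
    have hFK : K ∩ Uᶜ ∈ F := by
      refine Filter.inter_mem ?_ ?_
      · exact Filter.mem_inf_of_left (Filter.mem_map.2 hevK)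
      · exact Filter.mem_inf_of_right (Filter.mem_principal_self _)
    haveI := hFne
    obtain ⟨v, hvmem, hvcl⟩ :=
      (hKc.inter_right hUopen.isClosed_compl) (Filter.le_principal_iff.2 hFK)
    have hvF : ClusterPt v (Filter.map ev (𝓝 x₀)) := hvcl.mono inf_le_left
    have hSc : IsClosed {w : Fin n → ℝ | Monotone w} := by
      have hset : {w : Fin n → ℝ | Monotone w} =
          ⋂ (p : Fin n × Fin n) (_ : p.1 ≤ p.2), {w : Fin n → ℝ | w p.1 ≤ w p.2} := by
        ext w
        simp only [Set.mem_setOf_eq, Set.mem_iInter]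
        exact ⟨fun h p hp => h hp, fun h a b hab => h (a, b) hab⟩
      rw [hset]
      exact isClosed_iInter fun p => isClosed_iInter fun _ =>
        isClosed_le (continuous_apply p.1) (continuous_apply p.2)
    have hvmono : Monotone v := by
      have h1 : Filter.map ev (𝓝 x₀) ≤ 𝓟 {w : Fin n → ℝ | Monotone w} :=
        Filter.le_principal_iff.2 (Filter.mem_map.2 (Filter.Eventually.of_forall hev_sorted))
      have h2 := mem_closure_iff_clusterPt.2 (hvF.mono h1)
      rwa [hSc.closure_eq] at h2
    have hvprod : ∀ t : ℝ, (∏ k, (t - v k)) = ∏ k, (t - ev x₀ k) := by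
      intro t
      have hg : Continuous fun w : Fin n → ℝ => ∏ k, (t - w k) :=
        continuous_finset_prod _ fun k _ => continuous_const.sub (continuous_apply k)
      have hT : Tendsto (fun x => ∏ k, (t - ev x k)) (𝓝 x₀) (𝓝 (∏ k, (t - ev x₀ k))) := by
        have heq : (fun x => ∏ k, (t - ev x k))
            = fun x => (t • (1 : Matrix (Fin n) (Fin n) ℝ) - A x).det := by
          funext x; rw [hprod x t, aux_eval_charpoly]
        have heq0 : (∏ k, (t - ev x₀ k)) = (t • (1 : Matrix (Fin n) (Fin n) ℝ) - A x₀).det := by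
          rw [hprod x₀ t, aux_eval_charpoly]
        rw [heq, heq0]
        exact ((continuous_const.sub hA_cont).matrix_det).tendsto x₀
      have hT' : Tendsto (fun w : Fin n → ℝ => ∏ k, (t - w k)) (Filter.map ev (𝓝 x₀))
          (𝓝 (∏ k, (t - ev x₀ k))) := by
        rw [Filter.tendsto_map'_iff]
        exact hT
      have hcl2 : ClusterPt (∏ k, (t - v k)) (𝓝 (∏ k, (t - ev x₀ k))) :=
        hvF.map hg.continuousAt hT'
      exact t2_iff_nhds.mp inferInstance hcl2
    have hms : Multiset.map v Finset.univ.val = Multiset.map (ev x₀) Finset.univ.val := by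
      have hrw : ∀ w : Fin n → ℝ, (∏ k, (Polynomial.X - C (w k)))
          = ((Multiset.map w Finset.univ.val).map fun a => Polynomial.X - C a).prod := by
        intro w
        rw [Multiset.map_map, Finset.prod_eq_multiset_prod]
        rfl
      have hpq : (∏ k, (Polynomial.X - C (v k))) = ∏ k, (Polynomial.X - C (ev x₀ k)) := by
        apply Polynomial.eq_of_infinite_eval_eq
        have hs : {t : ℝ | Polynomial.eval t (∏ k, (Polynomial.X - C (v k)))
            = Polynomial.eval t (∏ k, (Polynomial.X - C (ev x₀ k)))} = Set.univ := by
          ext t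
          simp only [Set.mem_setOf_eq, Set.mem_univ, iff_true, Polynomial.eval_prod,
            Polynomial.eval_sub, Polynomial.eval_X, Polynomial.eval_C]
          exact hvprod t
        rw [hs]
        exact Set.infinite_univ
      have h1 := congrArg Polynomial.roots hpq
      rwa [hrw v, hrw (ev x₀), Polynomial.roots_multiset_prod_X_sub_C,
        Polynomial.roots_multiset_prod_X_sub_C] at h1
    have hveq : v = ev x₀ := aux_sorted_unique hvmono (hev_sorted x₀) hms
    have hvU : v ∈ Uᶜ := hvmem.2
    rw [hveq] at hvU
    exact hvU hUx₀
  exact tendsto_pi_nhds.1 key i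
end

section
/- Fix a positive integer n, and consider monic real polynomials of degree n all of whose n roots (counted with multiplicity) are real. If a sequence of such polynomials converges to another such polynomial in the sense that each coefficient converges, then for every i ∈ {1,…,n} the i-th smallest root (counted with multiplicity) of the sequence of polynomials converges to the i-th smallest root of the limit polynomial. -/
open Filter Topology Polynomial

private lemma aux_prod_form {n : ℕ} (w : Fin n → ℝ) :
    (∏ i : Fin n, (X - C (w i))) =
      ((Multiset.map w Finset.univ.val).map fun a => X - C a).prod := by
  rw [Multiset.map_map, Finset.prod_eq_multiset_prod]
  rfl

private lemma aux_prod_eq {n : ℕ} (p : Polynomial ℝ) (hm : p.Monic) (hdeg : p.natDegree = n)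
    (v : Fin n → ℝ) (hroots : p.roots = Multiset.map v Finset.univ.val) :
    p = ∏ i : Fin n, (X - C (v i)) := by
  have hcard : Multiset.card p.roots = p.natDegree := by
    rw [hroots, hdeg]; simp
  have h := prod_multiset_X_sub_C_of_monic_of_roots_card_eq hm hcard
  rw [← h, hroots, aux_prod_form]

private lemma aux_coeff_formula {n : ℕ} (w : Fin n → ℝ) {j : ℕ} (hj : j ≤ n) :
    (∏ i : Fin n, (X - C (w i))).coeff j =
      (-1) ^ (n - j) *
        ∑ A ∈ Finset.univ.powersetCard (n - j), ∏ i ∈ A, w i := by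
  have hcard : Multiset.card (Multiset.map w Finset.univ.val) = n := by simp
  rw [aux_prod_form, Multiset.prod_X_sub_C_coeff _ (by rw [hcard]; exact hj), hcard,
    Finset.esymm_map_val]

private lemma aux_coeff_tendsto {n : ℕ} (v : ℕ → Fin n → ℝ) (t : Fin n → ℝ)
    (hv : ∀ i, Tendsto (fun k => v k i) atTop (𝓝 (t i))) (j : ℕ) :
    Tendsto (fun k => (∏ i : Fin n, (X - C (v k i))).coeff j) atTop
      (𝓝 ((∏ i : Fin n, (X - C (t i))).coeff j)) := by
  have hdeg : ∀ w : Fin n → ℝ, (∏ i : Fin n, (X - C (w i))).natDegree = n := by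
    intro w
    rw [natDegree_prod _ _ (fun i _ => X_sub_C_ne_zero (w i))]
    simp
  by_cases hj : j ≤ n
  · simp only [aux_coeff_formula _ hj]
    exact (tendsto_finset_sum _ fun A _ =>
      tendsto_finset_prod _ fun i _ => hv i).const_mul _
  · push_neg at hj
    have h0 : ∀ w : Fin n → ℝ, (∏ i : Fin n, (X - C (w i))).coeff j = 0 := fun w =>
      coeff_eq_zero_of_natDegree_lt (by rw [hdeg]; exact hj)
    simp only [h0]
    exact tendsto_const_nhds

private lemma aux_root_bound_s1 {n : ℕ} (hn : 0 < n) (p : Polynomial ℝ) (hm : p.Monic)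
    (hdeg : p.natDegree = n) {x : ℝ} (hx : p.IsRoot x) :
    |x| ≤ 1 + ∑ j ∈ Finset.range n, |p.coeff j| := by
  set S := ∑ j ∈ Finset.range n, |p.coeff j| with hS
  have hS0 : 0 ≤ S := Finset.sum_nonneg fun j _ => abs_nonneg _
  by_cases h1 : |x| ≤ 1
  · linarith
  push_neg at h1
  have hev : p.eval x = 0 := hx
  have hsum : p.eval x = ∑ j ∈ Finset.range (n + 1), p.coeff j * x ^ j := by
    rw [eval_eq_sum_range, hdeg]
  rw [Finset.sum_range_succ, hev] at hsum
  have hcn : p.coeff n = 1 := by rw [← hdeg]; exact hm.coeff_natDegree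
  rw [hcn, one_mul] at hsum
  have hxn : x ^ n = -∑ j ∈ Finset.range n, p.coeff j * x ^ j := by linarith
  have habs : |x| ^ n ≤ S * |x| ^ (n - 1) := by
    calc |x| ^ n = |x ^ n| := (abs_pow x n).symm
    _ = |∑ j ∈ Finset.range n, p.coeff j * x ^ j| := by rw [hxn, abs_neg]
    _ ≤ ∑ j ∈ Finset.range n, |p.coeff j * x ^ j| := Finset.abs_sum_le_sum_abs _ _
    _ ≤ ∑ j ∈ Finset.range n, |p.coeff j| * |x| ^ (n - 1) := by
        refine Finset.sum_le_sum fun j hj => ?_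
        rw [abs_mul, abs_pow]
        refine mul_le_mul_of_nonneg_left ?_ (abs_nonneg _)
        have hj' := Finset.mem_range.mp hj
        exact pow_le_pow_right₀ h1.le (by omega)
    _ = S * |x| ^ (n - 1) := by rw [← Finset.sum_mul]
  have hpow : |x| ^ n = |x| * |x| ^ (n - 1) := by
    rw [← pow_succ']
    congr 1
    omega
  have hpos : 0 < |x| ^ (n - 1) := pow_pos (by linarith) _
  rw [hpow] at habs
  nlinarith

private lemma aux_sorted_unique_s1 {n : ℕ} (f g : Fin n → ℝ) (hf : Monotone f) (hg : Monotone g)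
    (h : Multiset.map f Finset.univ.val = Multiset.map g Finset.univ.val) : f = g := by
  rw [show Multiset.map f Finset.univ.val = Finset.univ.val.map f from rfl,
    show Multiset.map g Finset.univ.val = Finset.univ.val.map g from rfl,
    Fin.univ_val_map, Fin.univ_val_map] at h
  exact List.ofFn_injective
    (List.Perm.eq_of_sortedLE hf.sortedLE_ofFn hg.sortedLE_ofFn (Multiset.coe_eq_coe.mp h))

/-- **Continuous dependence of ordered real roots on coefficients.**
Fix `n > 0`.  Let `p k` be a sequence of monic real polynomials of degree `n`,
each having all `n` roots real (counted with multiplicity), and let `q` be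
another such polynomial.  Suppose every coefficient of `p k` converges to the
corresponding coefficient of `q`.  If `r k : Fin n → ℝ` lists the roots of
`p k` in nondecreasing order with multiplicity, and `s : Fin n → ℝ` does the
same for `q`, then for every `i`, `r k i → s i` as `k → ∞`. -/
theorem sorted_roots_continuous_in_coefficients
    (n : ℕ) (hn : 0 < n)
    (p : ℕ → Polynomial ℝ) (q : Polynomial ℝ)
    (hp_monic : ∀ k, (p k).Monic) (hq_monic : q.Monic)
    (hp_deg : ∀ k, (p k).natDegree = n) (hq_deg : q.natDegree = n)
    (hcoeff : ∀ j : ℕ, Tendsto (fun k => (p k).coeff j) atTop (𝓝 (q.coeff j)))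
    (r : ℕ → Fin n → ℝ) (s : Fin n → ℝ)
    (hr_sorted : ∀ k, Monotone (r k)) (hs_sorted : Monotone s)
    (hr_roots : ∀ k, (p k).roots = Multiset.map (r k) Finset.univ.val)
    (hs_roots : q.roots = Multiset.map s Finset.univ.val) :
    ∀ i : Fin n, Tendsto (fun k => r k i) atTop (𝓝 (s i)) := by
  have hpk : ∀ k, p k = ∏ i : Fin n, (X - C (r k i)) := fun k =>
    aux_prod_eq _ (hp_monic k) (hp_deg k) _ (hr_roots k)
  -- uniform bound on the roots
  have hSten : Tendsto (fun k => ∑ j ∈ Finset.range n, |(p k).coeff j|) atTop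
      (𝓝 (∑ j ∈ Finset.range n, |q.coeff j|)) :=
    tendsto_finset_sum _ fun j _ => (hcoeff j).abs
  obtain ⟨M, hM⟩ := hSten.bddAbove_range
  have hbound : ∀ k i, |r k i| ≤ 1 + M := by
    intro k i
    have hroot : (r k i) ∈ (p k).roots := by
      rw [hr_roots k]
      exact Multiset.mem_map_of_mem _ (Finset.mem_univ i)
    have h1 := aux_root_bound_s1 hn (p k) (hp_monic k) (hp_deg k)
      (isRoot_of_mem_roots hroot)
    have h2 : ∑ j ∈ Finset.range n, |(p k).coeff j| ≤ M := hM ⟨k, rfl⟩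
    linarith
  have main : Tendsto r atTop (𝓝 s) := by
    apply tendsto_of_subseq_tendsto
    intro ns hns
    have hmem : ∀ k, r (ns k) ∈
        Set.Icc (fun _ : Fin n => -(1 + M)) (fun _ : Fin n => 1 + M) := by
      intro k
      constructor <;> intro i
      · exact neg_le_of_abs_le (hbound _ i)
      · exact le_of_abs_le (hbound _ i)
    obtain ⟨t, -, φ, hφ, hts⟩ := (isCompact_Icc).tendsto_subseq hmem
    have hcoord : ∀ i, Tendsto (fun k => r (ns (φ k)) i) atTop (𝓝 (t i)) := by
      intro i
      exact (tendsto_pi_nhds.mp hts i)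
    have ht_mono : Monotone t := by
      intro i j hij
      exact le_of_tendsto_of_tendsto' (hcoord i) (hcoord j)
        (fun k => hr_sorted _ hij)
    have hqt : q = ∏ i : Fin n, (X - C (t i)) := by
      ext j
      have h1 : Tendsto (fun k => (p (ns (φ k))).coeff j) atTop (𝓝 (q.coeff j)) :=
        (hcoeff j).comp (hns.comp hφ.tendsto_atTop)
      have h2 : Tendsto (fun k => (p (ns (φ k))).coeff j) atTop
          (𝓝 ((∏ i : Fin n, (X - C (t i))).coeff j)) := by
        have := aux_coeff_tendsto (fun k => r (ns (φ k))) t hcoord j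
        simpa only [← hpk] using this
      exact tendsto_nhds_unique h1 h2
    have hts_roots : Multiset.map t Finset.univ.val = Multiset.map s Finset.univ.val := by
      have hq2 : q.roots = Multiset.map t Finset.univ.val := by
        rw [hqt, aux_prod_form, roots_multiset_prod_X_sub_C]
      rw [← hq2, hs_roots]
    have hteq : t = s := aux_sorted_unique_s1 _ _ ht_mono hs_sorted hts_roots
    exact ⟨φ, hteq ▸ hts⟩
  intro i
  exact ((continuous_apply i).tendsto s).comp main
end
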